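/- Let E and F be Banach lattices. Let K^r denote the set of AM-σ-un-compact continuous linear operators T : E → F for which there exists a positive AM-σ-un-compact continuous linear operator S with −S ≤ T ≤ S, and for T ∈ K^r set ν(T) = inf{‖S‖ : S positive, AM-σ-un-compact, −S ≤ T ≤ S}. Suppose T_n, T ∈ K^r, ν(T_n − T) → 0, and each T_n has a modulus |T_n| (a least upper bound of T_n and −T_n in the operator order). Then T has a modulus |T|, and ν(|T_n| − |T|) → 0. -/

import Mathlib

open Filter Topology

section Defs

variable {F : Type*} [NormedAddCommGroup F] [Lattice F] [HasSolidNorm F] [IsOrderedAddMonoid F] [NormedSpace ℝ F]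

/-- A sequence `y` un-converges to `y₀`: for every `u ≥ 0`, `‖|y n - y₀| ⊓ u‖ → 0`. -/
def UnTendsto (y : ℕ → F) (y₀ : F) : Prop :=
  ∀ u : F, 0 ≤ u → Tendsto (fun n => ‖|y n - y₀| ⊓ u‖) atTop (nhds 0)

/-- A sequence `y` uaw-converges to `y₀`: for every `u ≥ 0` and every positive continuous
linear functional `f`, `f (|y n - y₀| ⊓ u) → 0`. -/
def UawTendsto (y : ℕ → F) (y₀ : F) : Prop :=
  ∀ u : F, 0 ≤ u → ∀ f : F →L[ℝ] ℝ, (∀ z : F, 0 ≤ z → 0 ≤ f z) →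
    Tendsto (fun n => f (|y n - y₀| ⊓ u)) atTop (nhds 0)

/-- A set is relatively sequentially un-compact: every sequence in it has a subsequence
un-converging to some element of `F`. -/
def RelSeqUnCompact (A : Set F) : Prop :=
  ∀ y : ℕ → F, (∀ n, y n ∈ A) →
    ∃ (z : F) (φ : ℕ → ℕ), StrictMono φ ∧ UnTendsto (fun n => y (φ n)) z

/-- A set is relatively sequentially uaw-compact: every sequence in it has a subsequence
uaw-converging to some element of `F`. -/
def RelSeqUawCompact (A : Set F) : Prop :=
  ∀ y : ℕ → F, (∀ n, y n ∈ A) →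
    ∃ (z : F) (φ : ℕ → ℕ), StrictMono φ ∧ UawTendsto (fun n => y (φ n)) z

end Defs

section OpDefs

variable {E F : Type*} [NormedAddCommGroup E] [Lattice E] [HasSolidNorm E] [IsOrderedAddMonoid E] [NormedSpace ℝ E]
  [NormedAddCommGroup F] [Lattice F] [HasSolidNorm F] [IsOrderedAddMonoid F] [NormedSpace ℝ F]

/-- `T` is AM-σ-un-compact: the image of every order interval `[-x, x]` (`x ≥ 0`) is
relatively sequentially un-compact. -/
def AMSigmaUnCompact (T : E →L[ℝ] F) : Prop :=
  ∀ x : E, 0 ≤ x → RelSeqUnCompact (T '' Set.Icc (-x) x)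

/-- `T` is o-σ-uaw-compact: the image of every order interval `[-x, x]` (`x ≥ 0`) is
relatively sequentially uaw-compact. -/
def OSigmaUawCompact (T : E →L[ℝ] F) : Prop :=
  ∀ x : E, 0 ≤ x → RelSeqUawCompact (T '' Set.Icc (-x) x)

/-- Operator order: `OpLE S T` iff `(T - S) x ≥ 0` for all `x ≥ 0`. -/
def OpLE (S T : E →L[ℝ] F) : Prop := ∀ x : E, 0 ≤ x → S x ≤ T x

end OpDefs

/-- `T` belongs to `K^r`: `T` is AM-σ-un-compact and is dominated by a positive
AM-σ-un-compact operator. -/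
def KrAMUn {E F : Type*} [NormedAddCommGroup E] [Lattice E] [HasSolidNorm E] [IsOrderedAddMonoid E] [NormedSpace ℝ E]
    [NormedAddCommGroup F] [Lattice F] [HasSolidNorm F] [IsOrderedAddMonoid F] [NormedSpace ℝ F] (T : E →L[ℝ] F) : Prop :=
  AMSigmaUnCompact T ∧
    ∃ S : E →L[ℝ] F, OpLE 0 S ∧ AMSigmaUnCompact S ∧ OpLE (-S) T ∧ OpLE T S

/-- The AM-un-norm `ν(T) = inf {‖S‖ : S positive, AM-σ-un-compact, -S ≤ T ≤ S}`. -/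
noncomputable def nuAMUn {E F : Type*} [NormedAddCommGroup E] [Lattice E] [HasSolidNorm E] [IsOrderedAddMonoid E] [NormedSpace ℝ E]
    [NormedAddCommGroup F] [Lattice F] [HasSolidNorm F] [IsOrderedAddMonoid F] [NormedSpace ℝ F] (T : E →L[ℝ] F) : ℝ :=
  sInf {c : ℝ | ∃ S : E →L[ℝ] F,
    OpLE 0 S ∧ AMSigmaUnCompact S ∧ OpLE (-S) T ∧ OpLE T S ∧ ‖S‖ = c}

/-- `M` is the modulus of `T`: the least upper bound of `T` and `-T` in the operator
order. -/
def IsModulus {E F : Type*} [NormedAddCommGroup E] [Lattice E] [HasSolidNorm E] [IsOrderedAddMonoid E] [NormedSpace ℝ E]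
    [NormedAddCommGroup F] [Lattice F] [HasSolidNorm F] [IsOrderedAddMonoid F] [NormedSpace ℝ F] (T M : E →L[ℝ] F) : Prop :=
  OpLE T M ∧ OpLE (-T) M ∧ ∀ R : E →L[ℝ] F, OpLE T R → OpLE (-T) R → OpLE M R

variable {E F : Type*}
  [NormedAddCommGroup E] [Lattice E] [HasSolidNorm E] [IsOrderedAddMonoid E] [NormedSpace ℝ E] [CompleteSpace E]
  [NormedAddCommGroup F] [Lattice F] [HasSolidNorm F] [IsOrderedAddMonoid F] [NormedSpace ℝ F] [CompleteSpace F]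

section AuxLemmas

section LatF
variable {F : Type*} [NormedAddCommGroup F] [Lattice F] [HasSolidNorm F] [IsOrderedAddMonoid F]

lemma inf_add_le_of_nonneg {a b u : F} (ha : 0 ≤ a) (hb : 0 ≤ b) (hu : 0 ≤ u) :
    (a + b) ⊓ u ≤ a ⊓ u + b ⊓ u := by
  rw [inf_add, add_inf, add_inf]
  refine le_inf (le_inf inf_le_left ?_) (le_inf ?_ ?_)
  · exact inf_le_right.trans (le_add_of_nonneg_left ha)
  · exact inf_le_right.trans (le_add_of_nonneg_right hb)
  · exact inf_le_right.trans (le_add_of_nonneg_right hu)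

lemma abs_add_inf_le {c d u : F} (hu : 0 ≤ u) :
    |c + d| ⊓ u ≤ |c| ⊓ u + |d| ⊓ u :=
  le_trans (inf_le_inf_right u (abs_add_le c d))
    (inf_add_le_of_nonneg (abs_nonneg c) (abs_nonneg d) hu)

lemma norm_le_norm_of_le {a b : F} (ha : 0 ≤ a) (hab : a ≤ b) : ‖a‖ ≤ ‖b‖ := by
  exact HasSolidNorm.solid (abs_le_abs_of_nonneg ha hab)

end LatF

section UnF
variable {F : Type*} [NormedAddCommGroup F] [Lattice F] [HasSolidNorm F] [IsOrderedAddMonoid F] [NormedSpace ℝ F]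

lemma UnTendsto.add' {y w : ℕ → F} {z₁ z₂ : F} (hy : UnTendsto y z₁) (hw : UnTendsto w z₂) :
    UnTendsto (fun n => y n + w n) (z₁ + z₂) := by
  intro u hu
  refine squeeze_zero (fun n => norm_nonneg _) (fun n => ?_)
    (by simpa using (hy u hu).add (hw u hu))
  have h1 : |y n + w n - (z₁ + z₂)| ⊓ u ≤ |y n - z₁| ⊓ u + |w n - z₂| ⊓ u := by
    have he : y n + w n - (z₁ + z₂) = (y n - z₁) + (w n - z₂) := by abel
    rw [he]; exact abs_add_inf_le hu
  calc ‖|y n + w n - (z₁ + z₂)| ⊓ u‖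
      ≤ ‖|y n - z₁| ⊓ u + |w n - z₂| ⊓ u‖ :=
        norm_le_norm_of_le (le_inf (abs_nonneg _) hu) h1
    _ ≤ ‖|y n - z₁| ⊓ u‖ + ‖|w n - z₂| ⊓ u‖ := norm_add_le _ _

lemma UnTendsto.comp_strictMono {y : ℕ → F} {z : F} (hy : UnTendsto y z) {φ : ℕ → ℕ}
    (hφ : StrictMono φ) : UnTendsto (fun n => y (φ n)) z := fun u hu =>
  (hy u hu).comp hφ.tendsto_atTop

end UnF

section OpAux
variable {E F : Type*} [NormedAddCommGroup E] [Lattice E] [HasSolidNorm E] [IsOrderedAddMonoid E] [NormedSpace ℝ E]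
  [NormedAddCommGroup F] [Lattice F] [HasSolidNorm F] [IsOrderedAddMonoid F] [NormedSpace ℝ F]

lemma AMSigmaUnCompact.add' {S₁ S₂ : E →L[ℝ] F} (h₁ : AMSigmaUnCompact S₁)
    (h₂ : AMSigmaUnCompact S₂) : AMSigmaUnCompact (S₁ + S₂) := by
  intro x hx y hy
  choose a ha hay using hy
  obtain ⟨z₁, φ, hφ, hz₁⟩ := h₁ x hx (fun n => S₁ (a n)) (fun n => ⟨a n, ha n, rfl⟩)
  obtain ⟨z₂, ψ, hψ, hz₂⟩ := h₂ x hx (fun n => S₂ (a (φ n))) (fun n => ⟨a (φ n), ha _, rfl⟩)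
  refine ⟨z₁ + z₂, φ ∘ ψ, hφ.comp hψ, ?_⟩
  have h1 : UnTendsto (fun n => S₁ (a (φ (ψ n)))) z₁ := hz₁.comp_strictMono hψ
  have hsum := h1.add' hz₂
  have heq : (fun n => y ((φ ∘ ψ) n)) =
      fun n => S₁ (a (φ (ψ n))) + S₂ (a (φ (ψ n))) := by
    funext n
    rw [← hay ((φ ∘ ψ) n)]
    simp [ContinuousLinearMap.add_apply, Function.comp]
  rw [heq]
  exact hsum

lemma norm_le_of_dominated {X S : E →L[ℝ] F} (hpos : OpLE 0 S)
    (hl : OpLE (-S) X) (hu : OpLE X S) : ‖X‖ ≤ ‖S‖ := by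
  refine X.opNorm_le_bound (norm_nonneg S) (fun x => ?_)
  have habs : ∀ y : E, 0 ≤ y → |X y| ≤ S y := by
    intro y hy
    refine abs_le'.2 ⟨hu y hy, ?_⟩
    have h2 := hl y hy
    rw [ContinuousLinearMap.neg_apply] at h2
    exact neg_le.1 h2
  have key : |X x| ≤ S |x| := by
    have hx : X x = X (x⁺) - X (x⁻) := by rw [← map_sub, posPart_sub_negPart]
    calc |X x| = |X (x⁺) - X (x⁻)| := by rw [hx]
      _ ≤ |X (x⁺)| + |X (x⁻)| := by
          rw [sub_eq_add_neg]
          exact (abs_add_le _ _).trans_eq (by rw [abs_neg])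
      _ ≤ S (x⁺) + S (x⁻) := add_le_add (habs _ (posPart_nonneg x)) (habs _ (negPart_nonneg x))
      _ = S (x⁺ + x⁻) := (map_add S _ _).symm
      _ = S |x| := by rw [posPart_add_negPart]
  calc ‖X x‖ = ‖|X x|‖ := (norm_abs_eq_norm _).symm
    _ ≤ ‖S |x|‖ := norm_le_norm_of_le (abs_nonneg _) key
    _ ≤ ‖S‖ * ‖|x|‖ := S.le_opNorm _
    _ = ‖S‖ * ‖x‖ := by rw [norm_abs_eq_norm]

end OpAux

end AuxLemmas

/-- If `T_n, T ∈ K^r`, `ν(T_n - T) → 0` and each `T_n` has a modulus, then `T` has a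
modulus and `ν(|T_n| - |T|) → 0`. -/
theorem modulus_of_nu_tendsto
    (Tn : ℕ → E →L[ℝ] F) (T : E →L[ℝ] F)
    (hTn : ∀ n, KrAMUn (Tn n)) (hT : KrAMUn T)
    (hlim : Tendsto (fun n => nuAMUn (Tn n - T)) atTop (nhds 0))
    (Mn : ℕ → E →L[ℝ] F) (hMn : ∀ n, IsModulus (Tn n) (Mn n)) :
    ∃ M : E →L[ℝ] F, IsModulus T M ∧
      Tendsto (fun n => nuAMUn (Mn n - M)) atTop (nhds 0) := by
  classical
  obtain ⟨hTc, S0, hS0pos, hS0c, hS0l, hS0u⟩ := hT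
  -- the witness set for any operator
  set W : (E →L[ℝ] F) → Set ℝ := fun X => {c : ℝ | ∃ S : E →L[ℝ] F,
    OpLE 0 S ∧ AMSigmaUnCompact S ∧ OpLE (-S) X ∧ OpLE X S ∧ ‖S‖ = c} with hW
  have hWbdd : ∀ X : E →L[ℝ] F, BddBelow (W X) := by
    rintro X
    exact ⟨0, by rintro c ⟨S, -, -, -, -, rfl⟩; exact norm_nonneg S⟩
  have hWnonneg : ∀ X : E →L[ℝ] F, ∀ c ∈ W X, (0:ℝ) ≤ c := by
    rintro X c ⟨S, -, -, -, -, rfl⟩; exact norm_nonneg S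
  -- nonemptiness of the witness set for `Tn n - T`
  have hne : ∀ n, ∃ S : E →L[ℝ] F, OpLE 0 S ∧ AMSigmaUnCompact S ∧
      OpLE (-S) (Tn n - T) ∧ OpLE (Tn n - T) S := by
    intro n
    obtain ⟨-, Sn, hSnpos, hSnc, hSnl, hSnu⟩ := hTn n
    refine ⟨Sn + S0, ?_, hSnc.add' hS0c, ?_, ?_⟩
    · intro x hx
      have h1 := hSnpos x hx; have h2 := hS0pos x hx
      simp only [ContinuousLinearMap.zero_apply, ContinuousLinearMap.add_apply] at *
      exact add_nonneg h1 h2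
    · intro x hx
      have h1 := hSnl x hx; have h2 := hS0u x hx
      simp only [ContinuousLinearMap.neg_apply, ContinuousLinearMap.add_apply,
        ContinuousLinearMap.sub_apply] at *
      rw [← sub_nonneg] at h1 h2 ⊢
      have := add_nonneg h1 h2
      convert this using 1; abel
    · intro x hx
      have h1 := hSnu x hx; have h2 := hS0l x hx
      simp only [ContinuousLinearMap.neg_apply, ContinuousLinearMap.add_apply,
        ContinuousLinearMap.sub_apply] at *
      rw [← sub_nonneg] at h1 h2 ⊢
      have := add_nonneg h1 h2
      convert this using 1; abel
  -- choose near-optimal witnesses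
  have hS'ex : ∀ n, ∃ S : E →L[ℝ] F, OpLE 0 S ∧ AMSigmaUnCompact S ∧
      OpLE (-S) (Tn n - T) ∧ OpLE (Tn n - T) S ∧
      ‖S‖ < nuAMUn (Tn n - T) + 1/((n:ℝ)+1) := by
    intro n
    obtain ⟨S, h1, h2, h3, h4⟩ := hne n
    have hmem : ‖S‖ ∈ W (Tn n - T) := ⟨S, h1, h2, h3, h4, rfl⟩
    have hlt : sInf (W (Tn n - T)) < sInf (W (Tn n - T)) + 1/((n:ℝ)+1) :=
      lt_add_of_pos_right _ (by positivity)
    obtain ⟨c, hcW, hclt⟩ := exists_lt_of_csInf_lt ⟨‖S‖, hmem⟩ hlt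
    obtain ⟨S', hp1, hp2, hp3, hp4, hp5⟩ := hcW
    exact ⟨S', hp1, hp2, hp3, hp4, by rw [hp5]; exact hclt⟩
  choose S' hS'pos hS'c hS'l hS'u hS'lt using hS'ex
  have hS'norm0 : Tendsto (fun n => ‖S' n‖) atTop (nhds 0) := by
    have hb : Tendsto (fun n : ℕ => nuAMUn (Tn n - T) + 1/((n:ℝ)+1)) atTop (nhds 0) := by
      have := hlim.add tendsto_one_div_add_atTop_nhds_zero_nat
      simpa using this
    exact squeeze_zero (fun n => norm_nonneg _) (fun n => (hS'lt n).le) hb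
  -- basic pointwise inequalities, in "0 ≤ ·" form
  have d1 : ∀ n (x : E), 0 ≤ x → 0 ≤ S' n x - (Tn n x - T x) := by
    intro n x hx
    have h := hS'u n x hx
    simp only [ContinuousLinearMap.sub_apply] at h
    rwa [← sub_nonneg] at h
  have d2 : ∀ n (x : E), 0 ≤ x → 0 ≤ (Tn n x - T x) + S' n x := by
    intro n x hx
    have h := hS'l n x hx
    simp only [ContinuousLinearMap.neg_apply, ContinuousLinearMap.sub_apply] at h
    rw [← sub_nonneg] at h
    convert h using 1; abel
  have d3 : ∀ n (x : E), 0 ≤ x → 0 ≤ Mn n x - Tn n x := by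
    intro n x hx
    have h := (hMn n).1 x hx
    rwa [← sub_nonneg] at h
  have d4 : ∀ n (x : E), 0 ≤ x → 0 ≤ Mn n x + Tn n x := by
    intro n x hx
    have h := (hMn n).2.1 x hx
    simp only [ContinuousLinearMap.neg_apply] at h
    rw [← sub_nonneg] at h
    convert h using 1; abel
  -- Claim A : Mn n ≤ Mn m + (S' n + S' m)
  have claimA : ∀ n m, OpLE (Mn n) (Mn m + (S' n + S' m)) := by
    intro n m
    refine (hMn n).2.2 _ ?_ ?_
    · intro x hx
      simp only [ContinuousLinearMap.add_apply]
      rw [← sub_nonneg]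
      have := add_nonneg (add_nonneg (d1 n x hx) (d2 m x hx)) (d3 m x hx)
      convert this using 1; abel
    · intro x hx
      simp only [ContinuousLinearMap.add_apply, ContinuousLinearMap.neg_apply]
      rw [← sub_nonneg]
      have := add_nonneg (add_nonneg (d2 n x hx) (d1 m x hx)) (d4 m x hx)
      convert this using 1; abel
  -- hence a norm bound on Mn n - Mn m
  have hMd : ∀ n m, ‖Mn n - Mn m‖ ≤ ‖S' n‖ + ‖S' m‖ := by
    intro n m
    have hpos : OpLE 0 (S' n + S' m) := by
      intro x hx
      have h1 := hS'pos n x hx; have h2 := hS'pos m x hx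
      simp only [ContinuousLinearMap.zero_apply, ContinuousLinearMap.add_apply] at *
      exact add_nonneg h1 h2
    have hl : OpLE (-(S' n + S' m)) (Mn n - Mn m) := by
      intro x hx
      have h := claimA m n x hx
      simp only [ContinuousLinearMap.add_apply, ContinuousLinearMap.neg_apply,
        ContinuousLinearMap.sub_apply] at *
      rw [← sub_nonneg] at h ⊢
      convert h using 1; abel
    have hu : OpLE (Mn n - Mn m) (S' n + S' m) := by
      intro x hx
      have h := claimA n m x hx
      simp only [ContinuousLinearMap.add_apply, ContinuousLinearMap.sub_apply] at *
      rw [← sub_nonneg] at h ⊢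
      convert h using 1; abel
    exact (norm_le_of_dominated hpos hl hu).trans (norm_add_le _ _)
  -- Mn is Cauchy, with limit M
  have hcauchy : CauchySeq Mn := by
    rw [Metric.cauchySeq_iff]
    intro ε hε
    have : ∀ᶠ n in atTop, ‖S' n‖ < ε/2 :=
      hS'norm0.eventually (gt_mem_nhds (half_pos hε))
    obtain ⟨N, hN⟩ := this.exists_forall_of_atTop
    refine ⟨N, fun m hm n hn => ?_⟩
    rw [dist_eq_norm]
    calc ‖Mn m - Mn n‖ ≤ ‖S' m‖ + ‖S' n‖ := hMd m n
      _ < ε/2 + ε/2 := add_lt_add (hN m hm) (hN n hn)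
      _ = ε := add_halves ε
  obtain ⟨M, hMlim⟩ := cauchySeq_tendsto_of_complete hcauchy
  -- pointwise limits
  have hMpt : ∀ x : E, Tendsto (fun n => Mn n x) atTop (nhds (M x)) := by
    intro x
    exact ((ContinuousLinearMap.apply ℝ F x).continuous.tendsto M).comp hMlim
  have hTpt : ∀ x : E, Tendsto (fun n => Tn n x) atTop (nhds (T x)) := by
    intro x
    rw [tendsto_iff_norm_sub_tendsto_zero]
    have hb : ∀ n, ‖Tn n x - T x‖ ≤ ‖S' n‖ * ‖x‖ := by
      intro n
      have := ((Tn n - T)).le_opNorm x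
      have hn := norm_le_of_dominated (hS'pos n) (hS'l n) (hS'u n)
      calc ‖Tn n x - T x‖ = ‖(Tn n - T) x‖ := by
            simp [ContinuousLinearMap.sub_apply]
        _ ≤ ‖Tn n - T‖ * ‖x‖ := (Tn n - T).le_opNorm x
        _ ≤ ‖S' n‖ * ‖x‖ := by
            exact mul_le_mul_of_nonneg_right hn (norm_nonneg x)
    refine squeeze_zero (fun n => norm_nonneg _) hb ?_
    simpa using hS'norm0.mul_const ‖x‖
  -- M is a modulus of T
  have hMT : OpLE T M := by
    intro x hx
    exact le_of_tendsto_of_tendsto' (hTpt x) (hMpt x) (fun n => (hMn n).1 x hx)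
  have hMnegT : OpLE (-T) M := by
    intro x hx
    simp only [ContinuousLinearMap.neg_apply]
    refine le_of_tendsto_of_tendsto' ((hTpt x).neg) (hMpt x) (fun n => ?_)
    have h := (hMn n).2.1 x hx
    simpa only [ContinuousLinearMap.neg_apply] using h
  have hMleast : ∀ R : E →L[ℝ] F, OpLE T R → OpLE (-T) R → OpLE M R := by
    intro R hR1 hR2 x hx
    have hb : ∀ n, Mn n x ≤ R x + S' n x := by
      intro n
      have hkey : OpLE (Mn n) (R + S' n) := by
        refine (hMn n).2.2 _ ?_ ?_
        · intro y hy
          simp only [ContinuousLinearMap.add_apply]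
          have hR := hR1 y hy
          rw [← sub_nonneg] at hR ⊢
          have h2 := add_nonneg (d1 n y hy) hR
          convert h2 using 1; abel
        · intro y hy
          simp only [ContinuousLinearMap.add_apply, ContinuousLinearMap.neg_apply]
          have hR := hR2 y hy
          simp only [ContinuousLinearMap.neg_apply] at hR
          rw [← sub_nonneg] at hR ⊢
          have h2 := add_nonneg (d2 n y hy) hR
          convert h2 using 1; abel
      have := hkey x hx
      simpa only [ContinuousLinearMap.add_apply] using this
    have hconv : Tendsto (fun n => R x + S' n x) atTop (nhds (R x)) := by
      have hx0 : Tendsto (fun n => S' n x) atTop (nhds 0) := by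
        rw [tendsto_zero_iff_norm_tendsto_zero]
        refine squeeze_zero (fun n => norm_nonneg _) (fun n => (S' n).le_opNorm x) ?_
        simpa using hS'norm0.mul_const ‖x‖
      simpa using (tendsto_const_nhds (x := R x)).add hx0
    exact le_of_tendsto_of_tendsto' (hMpt x) hconv hb
  refine ⟨M, ⟨hMT, hMnegT, hMleast⟩, ?_⟩
  -- final convergence
  have hB1 : ∀ n, OpLE (-(S' n)) (Mn n - M) := by
    intro n x hx
    have hle : OpLE M (Mn n + S' n) := by
      refine hMleast _ ?_ ?_
      · intro y hy
        simp only [ContinuousLinearMap.add_apply]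
        rw [← sub_nonneg]
        have h2 := add_nonneg (d2 n y hy) (d3 n y hy)
        convert h2 using 1; abel
      · intro y hy
        simp only [ContinuousLinearMap.add_apply, ContinuousLinearMap.neg_apply]
        rw [← sub_nonneg]
        have h2 := add_nonneg (d1 n y hy) (d4 n y hy)
        convert h2 using 1; abel
    have h := hle x hx
    simp only [ContinuousLinearMap.add_apply, ContinuousLinearMap.neg_apply,
      ContinuousLinearMap.sub_apply] at *
    rw [← sub_nonneg] at h ⊢
    convert h using 1; abel
  have hB2 : ∀ n, OpLE (Mn n - M) (S' n) := by
    intro n x hx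
    have hle : OpLE (Mn n) (M + S' n) := by
      refine (hMn n).2.2 _ ?_ ?_
      · intro y hy
        simp only [ContinuousLinearMap.add_apply]
        have hR := hMT y hy
        rw [← sub_nonneg] at hR ⊢
        have h2 := add_nonneg (d1 n y hy) hR
        convert h2 using 1; abel
      · intro y hy
        simp only [ContinuousLinearMap.add_apply, ContinuousLinearMap.neg_apply]
        have hR := hMnegT y hy
        simp only [ContinuousLinearMap.neg_apply] at hR
        rw [← sub_nonneg] at hR ⊢
        have h2 := add_nonneg (d2 n y hy) hR
        convert h2 using 1; abel
    have h := hle x hx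
    simp only [ContinuousLinearMap.add_apply, ContinuousLinearMap.sub_apply] at *
    rw [← sub_nonneg] at h ⊢
    convert h using 1; abel
  have hnu_le : ∀ n, nuAMUn (Mn n - M) ≤ ‖S' n‖ := by
    intro n
    have hmem : ‖S' n‖ ∈ W (Mn n - M) :=
      ⟨S' n, hS'pos n, hS'c n, hB1 n, hB2 n, rfl⟩
    exact csInf_le (hWbdd _) hmem
  have hnu_nonneg : ∀ n, 0 ≤ nuAMUn (Mn n - M) := by
    intro n
    exact Real.sInf_nonneg (hWnonneg _)
  exact squeeze_zero hnu_nonneg hnu_le hS'norm0
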